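/- Let μ be the bracket of the (2m+1)-dimensional Heisenberg Lie algebra h_m and let σ be an antisymmetric bilinear map h_m × h_m → h_m satisfying the 2-cocycle condition ∮(μ∘σ + σ∘μ) = 0 and the nil-condition μ∘σ + σ∘μ = 0 as trilinear maps (i.e., σ ∈ Z²_{2-nil}(μ,μ)). Then there exists a linear map f : h_m → h_m such that σ(x,y) = μ(f(x),y) + μ(x,f(y)) − f(μ(x,y)) for all x, y. In particular H²_{2-nil}(μ,μ) = 0. -/

import Mathlib

/-- Every σ ∈ Z²_{2-nil}(μ,μ) for the Heisenberg Lie algebra h_m is a coboundary: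
there is a linear f with σ = δ¹f. In particular H²_{2-nil}(μ,μ) = 0. -/
theorem heisenberg_two_nil_cocycle_is_coboundary (K V : Type*) [Field K] [CharZero K]
    [AddCommGroup V] [Module K V]
    (m : ℕ) (hm : 0 < m)
    (b : Module.Basis (Fin m ⊕ (Fin m ⊕ Unit)) K V)
    (μ : V →ₗ[K] V →ₗ[K] V)
    (hμa : ∀ u v : V, μ u v = - μ v u)
    (hxy : ∀ i : Fin m, μ (b (Sum.inl i)) (b (Sum.inr (Sum.inl i))) = b (Sum.inr (Sum.inr ())))
    (hxy' : ∀ i j : Fin m, i ≠ j → μ (b (Sum.inl i)) (b (Sum.inr (Sum.inl j))) = 0)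
    (hxx : ∀ i j : Fin m, μ (b (Sum.inl i)) (b (Sum.inl j)) = 0)
    (hyy : ∀ i j : Fin m, μ (b (Sum.inr (Sum.inl i))) (b (Sum.inr (Sum.inl j))) = 0)
    (hz : ∀ v : V, μ (b (Sum.inr (Sum.inr ()))) v = 0)
    (σ : V →ₗ[K] V →ₗ[K] V)
    (hσa : ∀ u v : V, σ u v = - σ v u)
    (hδ : ∀ x y z : V,
      (μ (σ x y) z + σ (μ x y) z) + (μ (σ y z) x + σ (μ y z) x) +
      (μ (σ z x) y + σ (μ z x) y) = 0)
    (hη : ∀ x y z : V, μ (σ x y) z + σ (μ x y) z = 0) :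
    ∃ f : V →ₗ[K] V, ∀ x y : V, σ x y = μ (f x) y + μ x (f y) - f (μ x y) := by

  classical
  set cz : V →ₗ[K] K := b.coord (Sum.inr (Sum.inr ())) with hcz
  have czZ : cz (b (Sum.inr (Sum.inr ()))) = 1 := by
    simp [hcz, Module.Basis.coord_apply, Module.Basis.repr_self]
  have czX : ∀ p, cz (b (Sum.inl p)) = 0 := by
    intro p; simp [hcz, Module.Basis.coord_apply, Module.Basis.repr_self, Finsupp.single_apply]
  have czY : ∀ p, cz (b (Sum.inr (Sum.inl p))) = 0 := by
    intro p; simp [hcz, Module.Basis.coord_apply, Module.Basis.repr_self, Finsupp.single_apply]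
  have mvZ : ∀ v, μ v (b (Sum.inr (Sum.inr ()))) = 0 := by
    intro v; rw [hμa, hz, neg_zero]
  have mXY : ∀ i j, μ (b (Sum.inl i)) (b (Sum.inr (Sum.inl j)))
      = if i = j then b (Sum.inr (Sum.inr ())) else 0 := by
    intro i j
    by_cases h : i = j
    · subst h; simp [hxy]
    · simp [h, hxy' i j h]
  have mYX : ∀ i j, μ (b (Sum.inr (Sum.inl i))) (b (Sum.inl j))
      = if j = i then -b (Sum.inr (Sum.inr ())) else 0 := by
    intro i j
    rw [hμa, mXY]
    split <;> simp
  have L0 : ∀ u v : V, μ u v = cz (μ u v) • b (Sum.inr (Sum.inr ())) := by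
    have h0 : μ = μ.compr₂ (cz.smulRight (b (Sum.inr (Sum.inr ())))) := by
      refine b.ext fun i => b.ext fun j => ?_
      rcases i with i | i | ⟨⟩ <;> rcases j with j | j | ⟨⟩ <;>
        simp [LinearMap.compr₂_apply, LinearMap.smulRight_apply, mXY, mYX, hxx, hyy, hz, mvZ,
          apply_ite cz, czZ, ite_smul]
    intro u v
    have := LinearMap.congr_fun (LinearMap.congr_fun h0 u) v
    simpa [LinearMap.compr₂_apply, LinearMap.smulRight_apply] using this
  have L3 : ∀ s : V, s = (∑ p, (cz (μ s (b (Sum.inr (Sum.inl p)))) • b (Sum.inl p)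
        - cz (μ s (b (Sum.inl p))) • b (Sum.inr (Sum.inl p))))
        + cz s • b (Sum.inr (Sum.inr ())) := by
    have h3 : (LinearMap.id : V →ₗ[K] V)
        = (∑ p : Fin m, ((cz ∘ₗ μ.flip (b (Sum.inr (Sum.inl p)))).smulRight (b (Sum.inl p))
            - (cz ∘ₗ μ.flip (b (Sum.inl p))).smulRight (b (Sum.inr (Sum.inl p)))))
          + cz.smulRight (b (Sum.inr (Sum.inr ()))) := by
      refine b.ext fun i => ?_
      rcases i with i | i | ⟨⟩ <;>
        simp [LinearMap.sum_apply, LinearMap.sub_apply, LinearMap.smulRight_apply,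
          LinearMap.flip_apply, mXY, mYX, hxx, hyy, hz, mvZ, apply_ite cz, czZ, czX, czY,
          ite_smul, Finset.sum_ite_eq, Finset.sum_ite_eq']
    intro s
    have := LinearMap.congr_fun h3 s
    simpa [LinearMap.sum_apply, LinearMap.sub_apply, LinearMap.smulRight_apply,
      LinearMap.flip_apply] using this
  have hη' : ∀ x y w : V, σ (μ x y) w = -μ (σ x y) w := by
    intro x y w
    have := hη x y w
    linear_combination (norm := module) this
  -- σ(z, ·) lands in the span of z
  have hσZ : ∀ w, σ (b (Sum.inr (Sum.inr ()))) w
      = -μ (σ (b (Sum.inl ⟨0, hm⟩)) (b (Sum.inr (Sum.inl ⟨0, hm⟩)))) w := by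
    intro w
    have := hη' (b (Sum.inl ⟨0, hm⟩)) (b (Sum.inr (Sum.inl ⟨0, hm⟩))) w
    rwa [hxy] at this
  have L1 : ∀ w, σ (b (Sum.inr (Sum.inr ()))) w
      = cz (σ (b (Sum.inr (Sum.inr ()))) w) • b (Sum.inr (Sum.inr ())) := by
    intro w
    rw [hσZ w, L0 (σ (b (Sum.inl ⟨0, hm⟩)) (b (Sum.inr (Sum.inl ⟨0, hm⟩)))) w]
    simp [czZ]
  -- key coefficient relation
  have KR : ∀ u v w : V, cz (μ (σ u v) w)
      = -(cz (μ u v) * cz (σ (b (Sum.inr (Sum.inr ()))) w)) := by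
    intro u v w
    have h1 : μ (σ u v) w = -σ (μ u v) w := by
      have := hη u v w
      linear_combination (norm := module) this
    rw [h1, map_neg]
    conv_lhs => rw [L0 u v]
    rw [map_smul, LinearMap.smul_apply, map_smul]
    simp [smul_eq_mul]
  set a : V := ∑ p, (cz (σ (b (Sum.inr (Sum.inr ()))) (b (Sum.inr (Sum.inl p)))) • b (Sum.inl p)
      - cz (σ (b (Sum.inr (Sum.inr ()))) (b (Sum.inl p))) • b (Sum.inr (Sum.inl p))) with ha
  -- structure lemma: σ u v = R(u,v) • z - C(u,v) • a
  have SL : ∀ u v : V, σ u v = cz (σ u v) • b (Sum.inr (Sum.inr ())) - cz (μ u v) • a := by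
    intro u v
    have hsum : (∑ p, (cz (μ (σ u v) (b (Sum.inr (Sum.inl p)))) • b (Sum.inl p)
        - cz (μ (σ u v) (b (Sum.inl p))) • b (Sum.inr (Sum.inl p))))
        = -(cz (μ u v)) • a := by
      rw [ha, Finset.smul_sum]
      refine Finset.sum_congr rfl fun p _ => ?_
      rw [KR, KR]
      module
    calc σ u v = _ := L3 (σ u v)
    _ = _ := by rw [hsum]; module
  set f : V →ₗ[K] V := b.constr K (fun i => match i with
    | Sum.inl i => (2⁻¹ : K) • ∑ p, (cz (σ (b (Sum.inl i)) (b (Sum.inr (Sum.inl p)))) • b (Sum.inl p)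
        - cz (σ (b (Sum.inl i)) (b (Sum.inl p))) • b (Sum.inr (Sum.inl p)))
    | Sum.inr (Sum.inl i) => (2⁻¹ : K) • ∑ p, (cz (σ (b (Sum.inr (Sum.inl i))) (b (Sum.inr (Sum.inl p)))) • b (Sum.inl p)
        - cz (σ (b (Sum.inr (Sum.inl i))) (b (Sum.inl p))) • b (Sum.inr (Sum.inl p)))
    | Sum.inr (Sum.inr _) => a) with hf
  have fX : ∀ i, f (b (Sum.inl i)) = (2⁻¹ : K) • ∑ p, (cz (σ (b (Sum.inl i)) (b (Sum.inr (Sum.inl p)))) • b (Sum.inl p)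
        - cz (σ (b (Sum.inl i)) (b (Sum.inl p))) • b (Sum.inr (Sum.inl p))) := by
    intro i; rw [hf, Module.Basis.constr_basis]
  have fY : ∀ i, f (b (Sum.inr (Sum.inl i))) = (2⁻¹ : K) • ∑ p, (cz (σ (b (Sum.inr (Sum.inl i))) (b (Sum.inr (Sum.inl p)))) • b (Sum.inl p)
        - cz (σ (b (Sum.inr (Sum.inl i))) (b (Sum.inl p))) • b (Sum.inr (Sum.inl p))) := by
    intro i; rw [hf, Module.Basis.constr_basis]
  have fZ : f (b (Sum.inr (Sum.inr ()))) = a := by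
    rw [hf, Module.Basis.constr_basis]
  have Ra : ∀ u v : V, cz (σ u v) = -cz (σ v u) := by
    intro u v; rw [hσa u v, map_neg]
  refine ⟨f, ?_⟩
  have main : σ = μ ∘ₗ f + μ.compl₂ f - μ.compr₂ f := by
    refine b.ext fun i => b.ext fun j => ?_
    have expand : (μ ∘ₗ f + μ.compl₂ f - μ.compr₂ f) (b i) (b j)
        = μ (f (b i)) (b j) + μ (b i) (f (b j)) - f (μ (b i) (b j)) := by
      simp
    rw [expand, SL]
    rcases i with i | i | ⟨⟩ <;> rcases j with j | j | ⟨⟩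
    · -- (X i, X j)
      rw [fX, fX, hxx, map_zero, map_zero]
      simp only [map_smul, map_sum, map_sub, LinearMap.smul_apply, LinearMap.sum_apply,
        LinearMap.sub_apply, mXY, mYX, hxx, hyy, smul_ite, smul_zero, smul_neg,
        Finset.sum_ite_eq, Finset.sum_ite_eq', Finset.mem_univ, if_true, zero_smul, sub_zero,
        zero_sub, map_zero, add_zero, map_neg, neg_neg, neg_zero, Finset.sum_const_zero,
        Finset.sum_neg_distrib]
      rw [Ra (b (Sum.inl j)) (b (Sum.inl i))]
      module
    · -- (X i, Y j)
      rw [fX, fY]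
      simp only [map_smul, map_sum, map_sub, map_neg, map_zero, LinearMap.smul_apply,
        LinearMap.sum_apply, LinearMap.sub_apply, mXY, mYX, hxx, hyy, hz, mvZ, smul_ite,
        smul_zero, smul_neg, Finset.sum_ite_eq, Finset.sum_ite_eq', Finset.mem_univ, if_true,
        zero_smul, one_smul, neg_one_smul, sub_zero, zero_sub, add_zero, zero_add, neg_neg, neg_zero,
        Finset.sum_const_zero, Finset.sum_neg_distrib, apply_ite cz, apply_ite f, fZ, czZ,
        czX, czY, ite_smul]
      rw [Ra (b (Sum.inr (Sum.inl j))) (b (Sum.inl i))]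
      module
    · -- (X i, Z)
      rw [fX, fZ, ha]
      simp only [map_smul, map_sum, map_sub, map_neg, map_zero, LinearMap.smul_apply,
        LinearMap.sum_apply, LinearMap.sub_apply, mXY, mYX, hxx, hyy, hz, mvZ, smul_ite,
        smul_zero, smul_neg, Finset.sum_ite_eq, Finset.sum_ite_eq', Finset.mem_univ, if_true,
        zero_smul, one_smul, neg_one_smul, sub_zero, zero_sub, add_zero, zero_add, neg_neg, neg_zero,
        Finset.sum_const_zero, Finset.sum_neg_distrib, apply_ite cz, czZ, czX, czY, ite_smul]
      rw [Ra (b (Sum.inl i)) (b (Sum.inr (Sum.inr ())))]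
      module
    · -- (Y i, X j)
      rw [fY, fX]
      simp only [map_smul, map_sum, map_sub, map_neg, map_zero, LinearMap.smul_apply,
        LinearMap.sum_apply, LinearMap.sub_apply, mXY, mYX, hxx, hyy, hz, mvZ, smul_ite,
        smul_zero, smul_neg, Finset.sum_ite_eq, Finset.sum_ite_eq', Finset.mem_univ, if_true,
        zero_smul, one_smul, neg_one_smul, sub_zero, zero_sub, add_zero, zero_add, neg_neg, neg_zero,
        Finset.sum_const_zero, Finset.sum_neg_distrib, apply_ite cz, apply_ite f, fZ, czZ,
        czX, czY, ite_smul]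
      rw [Ra (b (Sum.inl j)) (b (Sum.inr (Sum.inl i)))]
      module
    · -- (Y i, Y j)
      rw [fY, fY, hyy, map_zero, map_zero]
      simp only [map_smul, map_sum, map_sub, map_neg, map_zero, LinearMap.smul_apply,
        LinearMap.sum_apply, LinearMap.sub_apply, mXY, mYX, hxx, hyy, hz, mvZ, smul_ite,
        smul_zero, smul_neg, Finset.sum_ite_eq, Finset.sum_ite_eq', Finset.mem_univ, if_true,
        zero_smul, one_smul, neg_one_smul, sub_zero, zero_sub, add_zero, zero_add, neg_neg, neg_zero,
        Finset.sum_const_zero, Finset.sum_neg_distrib, czZ, czX, czY, ite_smul]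
      rw [Ra (b (Sum.inr (Sum.inl j))) (b (Sum.inr (Sum.inl i)))]
      module
    · -- (Y i, Z)
      rw [fY, fZ, ha]
      simp only [map_smul, map_sum, map_sub, map_neg, map_zero, LinearMap.smul_apply,
        LinearMap.sum_apply, LinearMap.sub_apply, mXY, mYX, hxx, hyy, hz, mvZ, smul_ite,
        smul_zero, smul_neg, Finset.sum_ite_eq, Finset.sum_ite_eq', Finset.mem_univ, if_true,
        zero_smul, one_smul, neg_one_smul, sub_zero, zero_sub, add_zero, zero_add, neg_neg, neg_zero,
        Finset.sum_const_zero, Finset.sum_neg_distrib, apply_ite cz, czZ, czX, czY, ite_smul]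
      rw [Ra (b (Sum.inr (Sum.inl i))) (b (Sum.inr (Sum.inr ())))]
      module
    · -- (Z, X j)
      rw [fZ, fX, ha]
      simp only [map_smul, map_sum, map_sub, map_neg, map_zero, LinearMap.smul_apply,
        LinearMap.sum_apply, LinearMap.sub_apply, mXY, mYX, hxx, hyy, hz, mvZ, smul_ite,
        smul_zero, smul_neg, Finset.sum_ite_eq, Finset.sum_ite_eq', Finset.mem_univ, if_true,
        zero_smul, one_smul, neg_one_smul, sub_zero, zero_sub, add_zero, zero_add, neg_neg, neg_zero,
        Finset.sum_const_zero, Finset.sum_neg_distrib, apply_ite cz, czZ, czX, czY, ite_smul]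
    · -- (Z, Y j)
      rw [fZ, fY, ha]
      simp only [map_smul, map_sum, map_sub, map_neg, map_zero, LinearMap.smul_apply,
        LinearMap.sum_apply, LinearMap.sub_apply, mXY, mYX, hxx, hyy, hz, mvZ, smul_ite,
        smul_zero, smul_neg, Finset.sum_ite_eq, Finset.sum_ite_eq', Finset.mem_univ, if_true,
        zero_smul, one_smul, neg_one_smul, sub_zero, zero_sub, add_zero, zero_add, neg_neg, neg_zero,
        Finset.sum_const_zero, Finset.sum_neg_distrib, apply_ite cz, czZ, czX, czY, ite_smul]
    · -- (Z, Z)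
      have hzz : cz (σ (b (Sum.inr (Sum.inr ()))) (b (Sum.inr (Sum.inr ())))) = 0 := by
        have h := Ra (b (Sum.inr (Sum.inr ()))) (b (Sum.inr (Sum.inr ())))
        linear_combination h / 2
      rw [fZ, hzz]
      simp [mvZ, hz]
  intro x y
  have := LinearMap.congr_fun (LinearMap.congr_fun main x) y
  simpa using this
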